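/- For each p ∈ (0,1), the function η ↦ kl(p+η‖p) is a strictly increasing continuous bijection from [0, 1−p] onto [0, log(1/p)]. Consequently, for every ε > 0: if p ∈ (0, e^{−ε}] there is a unique η ∈ [0, 1−p] with kl(p+η‖p) = ε, and if p ∈ (e^{−ε}, 1] then kl(p+η‖p) < ε for all η ∈ [0, 1−p]. -/

import Mathlib

open Real

/-- Bernoulli Kullback–Leibler divergence `kl(a‖b)`. -/
noncomputable def klBer (a b : ℝ) : ℝ :=
  a * Real.log (a / b) + (1 - a) * Real.log ((1 - a) / (1 - b))

/-- **Lemma 5**: for `p ∈ (0,1)`, the map `η ↦ kl(p+η‖p)` is a strictly increasing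
continuous bijection from `[0, 1-p]` onto `[0, log(1/p)]`. Consequently, for every
`ε > 0`: if `p ≤ e^{-ε}` there is a unique `η ∈ [0, 1-p]` with `kl(p+η‖p) = ε`, and
if `p > e^{-ε}` then `kl(p+η‖p) < ε` for all `η ∈ [0, 1-p]`. -/
theorem kl_strictMono_bijective (p : ℝ) (hp : p ∈ Set.Ioo (0 : ℝ) 1) :
    StrictMonoOn (fun η => klBer (p + η) p) (Set.Icc 0 (1 - p)) ∧
    ContinuousOn (fun η => klBer (p + η) p) (Set.Icc 0 (1 - p)) ∧
    Set.BijOn (fun η => klBer (p + η) p) (Set.Icc 0 (1 - p))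
      (Set.Icc 0 (Real.log (1 / p))) ∧
    (∀ ε : ℝ, 0 < ε →
      (p ≤ Real.exp (-ε) →
        ∃! η : ℝ, η ∈ Set.Icc 0 (1 - p) ∧ klBer (p + η) p = ε) ∧
      (Real.exp (-ε) < p →
        ∀ η ∈ Set.Icc (0 : ℝ) (1 - p), klBer (p + η) p < ε)) := by
  obtain ⟨hp0, hp1⟩ := hp
  have hq : 0 < 1 - p := by linarith
  set f : ℝ → ℝ := fun η => klBer (p + η) p with hfdef
  set g : ℝ → ℝ := fun η => ((p + η) * Real.log (p + η) - (p + η) * Real.log p)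
      + ((1 - p - η) * Real.log (1 - p - η) - (1 - p - η) * Real.log (1 - p)) with hgdef
  -- f = g on the domain
  have heq : Set.EqOn f g (Set.Icc 0 (1 - p)) := by
    intro x hx
    obtain ⟨hx0, hx1⟩ := hx
    have hpx : 0 < p + x := by linarith
    have h1 : Real.log ((p + x) / p) = Real.log (p + x) - Real.log p :=
      Real.log_div (ne_of_gt hpx) (ne_of_gt hp0)
    simp only [hfdef, hgdef, klBer]
    rcases eq_or_lt_of_le hx1 with h | h
    · have h2 : 1 - (p + x) = 0 := by linarith
      have h3 : 1 - p - x = 0 := by linarith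
      rw [h1, h2, h3]
      ring
    · have hqx : 0 < 1 - p - x := by linarith
      have h2 : Real.log ((1 - (p + x)) / (1 - p))
          = Real.log (1 - p - x) - Real.log (1 - p) := by
        rw [show 1 - (p + x) = 1 - p - x by ring]
        exact Real.log_div (ne_of_gt hqx) (ne_of_gt hq)
      rw [h1, h2]
      ring
  -- g is continuous on ℝ
  have hgc : Continuous g := by
    have h1 : Continuous fun η : ℝ => (p + η) * Real.log (p + η) :=
      Real.continuous_mul_log.comp (continuous_const.add continuous_id)
    have h2 : Continuous fun η : ℝ => (1 - p - η) * Real.log (1 - p - η) :=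
      Real.continuous_mul_log.comp (continuous_const.sub continuous_id)
    rw [hgdef]
    fun_prop
  -- derivative of g
  have hderiv : ∀ x ∈ Set.Ioo (0 : ℝ) (1 - p),
      HasDerivAt g (Real.log (p + x) - Real.log p
        - Real.log (1 - p - x) + Real.log (1 - p)) x := by
    intro x hx
    obtain ⟨hx0, hx1⟩ := hx
    have hpx : 0 < p + x := by linarith
    have hqx : 0 < 1 - p - x := by linarith
    have hinner1 : HasDerivAt (fun η : ℝ => p + η) 1 x := by
      simpa using (hasDerivAt_id x).const_add p
    have hinner2 : HasDerivAt (fun η : ℝ => 1 - p - η) (-1) x := by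
      simpa using (hasDerivAt_id x).const_sub (1 - p)
    have h1 : HasDerivAt (fun η : ℝ => (p + η) * Real.log (p + η))
        ((Real.log (p + x) + 1) * 1) x :=
      (Real.hasDerivAt_mul_log hpx.ne').comp x hinner1
    have h2 : HasDerivAt (fun η : ℝ => (p + η) * Real.log p) (1 * Real.log p) x :=
      hinner1.mul_const _
    have h3 : HasDerivAt (fun η : ℝ => (1 - p - η) * Real.log (1 - p - η))
        ((Real.log (1 - p - x) + 1) * (-1)) x :=
      (Real.hasDerivAt_mul_log hqx.ne').comp x hinner2
    have h4 : HasDerivAt (fun η : ℝ => (1 - p - η) * Real.log (1 - p))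
        ((-1) * Real.log (1 - p)) x := hinner2.mul_const _
    have := (h1.sub h2).add (h3.sub h4)
    exact this.congr_deriv (by ring)
  -- strict monotonicity of g
  have hgmono : StrictMonoOn g (Set.Icc 0 (1 - p)) := by
    apply strictMonoOn_of_deriv_pos (convex_Icc _ _) hgc.continuousOn
    intro x hx
    rw [interior_Icc] at hx
    rw [(hderiv x hx).deriv]
    obtain ⟨hx0, hx1⟩ := hx
    have l1 : Real.log p < Real.log (p + x) := Real.log_lt_log hp0 (by linarith)
    have l2 : Real.log (1 - p - x) < Real.log (1 - p) :=
      Real.log_lt_log (by linarith) (by linarith)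
    linarith
  -- endpoint values
  have hg0 : g 0 = 0 := by simp [hgdef]
  have hg1 : g (1 - p) = Real.log (1 / p) := by
    have : p + (1 - p) = 1 := by ring
    simp [hgdef, this, Real.log_one, one_div, Real.log_inv]
  have hmonof : StrictMonoOn f (Set.Icc 0 (1 - p)) := by
    intro a ha b hb hab
    rw [heq ha, heq hb]
    exact hgmono ha hb hab
  have hcontf : ContinuousOn f (Set.Icc 0 (1 - p)) :=
    (hgc.continuousOn).congr heq
  have hmem0 : (0 : ℝ) ∈ Set.Icc (0 : ℝ) (1 - p) := ⟨le_refl _, le_of_lt hq⟩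
  have hmem1 : (1 - p) ∈ Set.Icc (0 : ℝ) (1 - p) := ⟨le_of_lt hq, le_refl _⟩
  have hbij : Set.BijOn f (Set.Icc 0 (1 - p)) (Set.Icc 0 (Real.log (1 / p))) := by
    constructor
    · intro x hx
      have hmo := hgmono.monotoneOn
      constructor
      · rw [heq hx, ← hg0]; exact hmo hmem0 hx hx.1
      · rw [heq hx, ← hg1]; exact hmo hx hmem1 hx.2
    constructor
    · exact hmonof.injOn
    · have := intermediate_value_Icc (le_of_lt hq) hcontf
      rw [heq hmem0, heq hmem1, hg0, hg1] at this
      exact this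
  refine ⟨hmonof, hcontf, hbij, ?_⟩
  intro ε hε
  constructor
  · intro hple
    have hεle : ε ≤ Real.log (1 / p) := by
      have : Real.log p ≤ -ε := (Real.log_le_iff_le_exp hp0).mpr hple
      rw [one_div, Real.log_inv]; linarith
    obtain ⟨η, hη, hfη⟩ := hbij.surjOn ⟨le_of_lt hε, hεle⟩
    refine ⟨η, ⟨hη, hfη⟩, ?_⟩
    intro η' ⟨hη', hfη'⟩
    exact hbij.injOn hη' hη (show f η' = f η by rw [hfη]; exact hfη')
  · intro hplt
    have hεgt : Real.log (1 / p) < ε := by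
      have : -ε < Real.log p := (Real.lt_log_iff_exp_lt hp0).mpr hplt
      rw [one_div, Real.log_inv]; linarith
    intro η hη
    have : f η ≤ Real.log (1 / p) := by
      rw [heq hη, ← hg1]
      exact hgmono.monotoneOn hη hmem1 hη.2
    linarith
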